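/- Let g ∈ {1,2,3,4,6}, θ₀ ∈ (0, π/g), and define λₖ := cot((k−1)π/g + θ₀) for k = 1,…,g. If multiplicities mₖ ≥ 1 satisfy m_{k} = m_{k+2} (indices mod g) and Σₖ mₖ λₖ = 0 with Σₖ mₖ = n, then Σₖ mₖ λₖ² = (g−1)n. -/

import Mathlib

open Real

private lemma cotL1 (x y : ℝ) (hxy : y = x + π/2) (hs : Real.sin x ≠ 0)
    (hc : Real.cos x ≠ 0) : Real.cot x * Real.cot y = -1 := by
  subst hxy
  rw [Real.cot_eq_cos_div_sin, Real.cot_eq_cos_div_sin, Real.sin_add, Real.cos_add]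
  simp
  field_simp

private lemma alg2 (s c r : ℝ) (h3 : r^2 = 3)
    (h1 : s ≠ 0) (h2 : s + c*r ≠ 0) (h4 : c*r - s ≠ 0) :
    (c/s)*((c - s*r)/(s + c*r)) + (c/s)*(-(c + s*r)/(c*r - s))
      + ((c - s*r)/(s + c*r))*(-(c + s*r)/(c*r - s)) = -3 := by
  field_simp
  linear_combination (s*c^2 + s^3) * h3

private lemma alg1 (s c r : ℝ) (hp : s^2 + c^2 = 1) (h3 : r^2 = 3)
    (h1 : s ≠ 0) (h2 : s + c*r ≠ 0) (h4 : c*r - s ≠ 0) (h5 : 3*s - 4*s^3 ≠ 0) :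
    c/s + (c - s*r)/(s + c*r) + (-(c + s*r))/(c*r - s)
      = 3*(4*c^3 - 3*c)/(3*s - 4*s^3) := by
  have h5' : 3 - s^2*4 ≠ 0 := fun h => h5 (by linear_combination s*h)
  field_simp
  linear_combination (-36*c^3 + 36*s^2*c) * hp
    + (12*c^3 - 12*c^5 - 6*s^2*c - 4*s^2*c^3 + 8*s^4*c) * h3

private lemma sincos_shift (x : ℝ) :
    Real.sin (x + π/3) = (Real.sin x + Real.cos x * Real.sqrt 3)/2 ∧
    Real.cos (x + π/3) = (Real.cos x - Real.sin x * Real.sqrt 3)/2 := by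
  rw [Real.sin_add, Real.cos_add, Real.sin_pi_div_three, Real.cos_pi_div_three]
  constructor <;> ring

private lemma sincos_shift2 (x : ℝ) :
    Real.sin (x + 2*π/3) = (Real.cos x * Real.sqrt 3 - Real.sin x)/2 ∧
    Real.cos (x + 2*π/3) = -(Real.cos x + Real.sin x * Real.sqrt 3)/2 := by
  have h : x + 2*π/3 = (x + π/3) + π/3 := by ring
  have h3 : Real.sqrt 3 ^ 2 = 3 := Real.sq_sqrt (by norm_num)
  constructor
  · rw [h, (sincos_shift (x + π/3)).1, (sincos_shift x).1, (sincos_shift x).2]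
    field_simp
    linear_combination (-1 * Real.sin x) * h3
  · rw [h, (sincos_shift (x + π/3)).2, (sincos_shift x).1, (sincos_shift x).2]
    field_simp
    linear_combination (-1 * Real.cos x) * h3

private lemma cot_frac (x : ℝ) (h1 : Real.sin x ≠ 0) (h2 : Real.sin (x + π/3) ≠ 0)
    (h3 : Real.sin (x + 2*π/3) ≠ 0) :
    Real.cot x = Real.cos x / Real.sin x ∧
    Real.cot (x + π/3) = (Real.cos x - Real.sin x * Real.sqrt 3)/(Real.sin x + Real.cos x * Real.sqrt 3) ∧
    Real.cot (x + 2*π/3) = -(Real.cos x + Real.sin x * Real.sqrt 3)/(Real.cos x * Real.sqrt 3 - Real.sin x) := by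
  have e2 := sincos_shift x
  have e3 := sincos_shift2 x
  have n2 : Real.sin x + Real.cos x * Real.sqrt 3 ≠ 0 := by
    intro h; apply h2; rw [e2.1, h]; norm_num
  have n3 : Real.cos x * Real.sqrt 3 - Real.sin x ≠ 0 := by
    intro h; apply h3; rw [e3.1, h]; norm_num
  refine ⟨Real.cot_eq_cos_div_sin x, ?_, ?_⟩
  · rw [Real.cot_eq_cos_div_sin, e2.1, e2.2]; field_simp
  · rw [Real.cot_eq_cos_div_sin, e3.1, e3.2]; field_simp

private lemma cot_e2 (x : ℝ) (h1 : Real.sin x ≠ 0) (h2 : Real.sin (x + π/3) ≠ 0)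
    (h3 : Real.sin (x + 2*π/3) ≠ 0) :
    Real.cot x * Real.cot (x + π/3) + Real.cot x * Real.cot (x + 2*π/3)
      + Real.cot (x + π/3) * Real.cot (x + 2*π/3) = -3 := by
  obtain ⟨f1, f2, f3⟩ := cot_frac x h1 h2 h3
  have e2 := sincos_shift x
  have e3 := sincos_shift2 x
  have n2 : Real.sin x + Real.cos x * Real.sqrt 3 ≠ 0 := by
    intro h; apply h2; rw [e2.1, h]; norm_num
  have n3 : Real.cos x * Real.sqrt 3 - Real.sin x ≠ 0 := by
    intro h; apply h3; rw [e3.1, h]; norm_num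
  rw [f1, f2, f3]
  exact alg2 (Real.sin x) (Real.cos x) (Real.sqrt 3) (Real.sq_sqrt (by norm_num)) h1 n2 n3

private lemma cot_e1 (x : ℝ) (h1 : Real.sin x ≠ 0) (h2 : Real.sin (x + π/3) ≠ 0)
    (h3 : Real.sin (x + 2*π/3) ≠ 0) (h4 : Real.sin (3*x) ≠ 0) :
    Real.cot x + Real.cot (x + π/3) + Real.cot (x + 2*π/3) = 3 * Real.cot (3*x) := by
  obtain ⟨f1, f2, f3⟩ := cot_frac x h1 h2 h3
  have e2 := sincos_shift x
  have e3 := sincos_shift2 x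
  have n2 : Real.sin x + Real.cos x * Real.sqrt 3 ≠ 0 := by
    intro h; apply h2; rw [e2.1, h]; norm_num
  have n3 : Real.cos x * Real.sqrt 3 - Real.sin x ≠ 0 := by
    intro h; apply h3; rw [e3.1, h]; norm_num
  have hs3 : Real.sin (3*x) = 3 * Real.sin x - 4 * Real.sin x ^ 3 := Real.sin_three_mul x
  have hc3 : Real.cos (3*x) = 4 * Real.cos x ^ 3 - 3 * Real.cos x := Real.cos_three_mul x
  have h4' : 3 * Real.sin x - 4 * Real.sin x ^ 3 ≠ 0 := by rw [← hs3]; exact h4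
  rw [f1, f2, f3, Real.cot_eq_cos_div_sin, hs3, hc3]
  have := alg1 (Real.sin x) (Real.cos x) (Real.sqrt 3)
    (Real.sin_sq_add_cos_sq x) (Real.sq_sqrt (by norm_num)) h1 n2 n3 h4'
  rw [this]; ring

private lemma cotL5 (x : ℝ) (hs : Real.sin x ≠ 0) (hc : Real.cos x ≠ 0) :
    Real.cot x + Real.cot (x + π/2) = 2 * Real.cot (2*x) := by
  rw [Real.cot_eq_cos_div_sin, Real.cot_eq_cos_div_sin, Real.cot_eq_cos_div_sin,
    Real.sin_add, Real.cos_add, Real.sin_two_mul, Real.cos_two_mul]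
  simp only [Real.sin_pi_div_two, Real.cos_pi_div_two, mul_zero, mul_one, zero_add, zero_sub]
  have hp := Real.sin_sq_add_cos_sq x
  field_simp
  linear_combination (-1 : ℝ) * hp

theorem stmt_12 (g n : ℕ) (hg : g = 1 ∨ g = 2 ∨ g = 3 ∨ g = 4 ∨ g = 6)
    (θ₀ : ℝ) (hθ : 0 < θ₀ ∧ θ₀ < Real.pi / g)
    (lam : Fin g → ℝ)
    (hlam : ∀ k : Fin g, lam k = Real.cot ((k : ℕ) * Real.pi / g + θ₀))
    (m : Fin g → ℕ) (hm : ∀ k, 1 ≤ m k)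
    (hper : ∀ k : Fin g, m ⟨((k : ℕ) + 2) % g, Nat.mod_lt _ (by omega)⟩ = m k)
    (hmin : ∑ k, (m k : ℝ) * lam k = 0)
    (hn : ∑ k, m k = n) :
    ∑ k, (m k : ℝ) * lam k ^ 2 = (g - 1 : ℝ) * n := by
  have hπ := Real.pi_pos
  obtain ⟨ht0, ht1⟩ := hθ
  have sinpos : ∀ y : ℝ, 0 < y → y < π → Real.sin y ≠ 0 :=
    fun y h1 h2 => ne_of_gt (Real.sin_pos_of_pos_of_lt_pi h1 h2)
  rcases hg with rfl | rfl | rfl | rfl | rfl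
  · -- g = 1
    simp only [Fin.sum_univ_one] at hmin hn ⊢
    have hm0 : (m 0 : ℝ) ≠ 0 := by
      have := hm 0; positivity
    have hl : lam 0 = 0 := by
      rcases mul_eq_zero.mp hmin with h | h
      · exact absurd h hm0
      · exact h
    rw [hl]; push_cast; ring
  · -- g = 2
    have ht1' : θ₀ < π / 2 := by
      have : ((2:ℕ):ℝ) = 2 := by norm_num
      rwa [this] at ht1
    have l0 : lam 0 = Real.cot θ₀ := by
      rw [hlam 0, show (((0 : Fin 2):ℕ):ℝ) * π / ((2:ℕ):ℝ) + θ₀ = θ₀ by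
        rw [show ((0 : Fin 2):ℕ) = 0 from rfl]; push_cast; ring]
    have l1 : lam 1 = Real.cot (θ₀ + π/2) := by
      rw [hlam 1, show (((1 : Fin 2):ℕ):ℝ) * π / ((2:ℕ):ℝ) + θ₀ = θ₀ + π/2 by
        rw [show ((1 : Fin 2):ℕ) = 1 from rfl]; push_cast; ring]
    have hs : Real.sin θ₀ ≠ 0 := sinpos _ ht0 (by linarith)
    have hc : Real.cos θ₀ ≠ 0 :=
      ne_of_gt (Real.cos_pos_of_mem_Ioo ⟨by linarith, by linarith⟩)
    have hprod : lam 0 * lam 1 = -1 := by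
      rw [l0, l1]; exact cotL1 θ₀ _ rfl hs hc
    simp only [Fin.sum_univ_two] at hmin hn ⊢
    have hn' : (n:ℝ) = (m 0 : ℝ) + m 1 := by exact_mod_cast hn.symm
    push_cast
    linear_combination (-1 : ℝ) * hn' + (lam 0 + lam 1) * hmin
      + (-(m 0:ℝ) - (m 1:ℝ)) * hprod
  · -- g = 3
    have ht1' : θ₀ < π / 3 := by
      have : ((3:ℕ):ℝ) = 3 := by norm_num
      rwa [this] at ht1
    have l0 : lam 0 = Real.cot θ₀ := by
      rw [hlam 0, show (((0 : Fin 3):ℕ):ℝ) * π / ((3:ℕ):ℝ) + θ₀ = θ₀ by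
        rw [show ((0 : Fin 3):ℕ) = 0 from rfl]; push_cast; ring]
    have l1 : lam 1 = Real.cot (θ₀ + π/3) := by
      rw [hlam 1, show (((1 : Fin 3):ℕ):ℝ) * π / ((3:ℕ):ℝ) + θ₀ = θ₀ + π/3 by
        rw [show ((1 : Fin 3):ℕ) = 1 from rfl]; push_cast; ring]
    have l2 : lam 2 = Real.cot (θ₀ + 2*π/3) := by
      rw [hlam 2, show (((2 : Fin 3):ℕ):ℝ) * π / ((3:ℕ):ℝ) + θ₀ = θ₀ + 2*π/3 by
        rw [show ((2 : Fin 3):ℕ) = 2 from rfl]; push_cast; ring]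
    have hs0 : Real.sin θ₀ ≠ 0 := sinpos _ ht0 (by linarith)
    have hs1 : Real.sin (θ₀ + π/3) ≠ 0 := sinpos _ (by linarith) (by linarith)
    have hs2 : Real.sin (θ₀ + 2*π/3) ≠ 0 := sinpos _ (by linarith) (by linarith)
    have he2 : lam 0 * lam 1 + lam 0 * lam 2 + lam 1 * lam 2 = -3 := by
      rw [l0, l1, l2]; exact cot_e2 θ₀ hs0 hs1 hs2
    have hq1 : ((m 1 : ℕ) : ℝ) = m 0 := by
      have h1 : m 0 = m 1 := hper 1
      rw [h1]
    have hq2 : ((m 2 : ℕ) : ℝ) = m 0 := by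
      have h1 : m 2 = m 0 := hper 0
      rw [h1]
    simp only [Fin.sum_univ_three] at hmin hn ⊢
    have hn' : (n:ℝ) = (m 0 : ℝ) + m 1 + m 2 := by exact_mod_cast hn.symm
    have hm0 : (0:ℝ) < (m 0 : ℝ) := by have := hm 0; positivity
    have he1 : lam 0 + lam 1 + lam 2 = 0 := by
      have hk : (m 0 : ℝ) * (lam 0 + lam 1 + lam 2) = 0 := by
        linear_combination hmin - lam 1 * hq1 - lam 2 * hq2
      rcases mul_eq_zero.mp hk with h | h
      · linarith
      · exact h
    push_cast
    linear_combination (-2 : ℝ) * hn' + (lam 1^2 - 2) * hq1 + (lam 2^2 - 2) * hq2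
      + (m 0:ℝ) * (lam 0 + lam 1 + lam 2) * he1 + (-2 : ℝ) * (m 0:ℝ) * he2
  · -- g = 4
    have ht1' : θ₀ < π / 4 := by
      have : ((4:ℕ):ℝ) = 4 := by norm_num
      rwa [this] at ht1
    have l0 : lam 0 = Real.cot θ₀ := by
      rw [hlam 0, show (((0 : Fin 4):ℕ):ℝ) * π / ((4:ℕ):ℝ) + θ₀ = θ₀ by
        rw [show ((0 : Fin 4):ℕ) = 0 from rfl]; push_cast; ring]
    have l1 : lam 1 = Real.cot (θ₀ + π/4) := by
      rw [hlam 1, show (((1 : Fin 4):ℕ):ℝ) * π / ((4:ℕ):ℝ) + θ₀ = θ₀ + π/4 by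
        rw [show ((1 : Fin 4):ℕ) = 1 from rfl]; push_cast; ring]
    have l2 : lam 2 = Real.cot (θ₀ + π/2) := by
      rw [hlam 2, show (((2 : Fin 4):ℕ):ℝ) * π / ((4:ℕ):ℝ) + θ₀ = θ₀ + π/2 by
        rw [show ((2 : Fin 4):ℕ) = 2 from rfl]; push_cast; ring]
    have l3 : lam 3 = Real.cot ((θ₀ + π/4) + π/2) := by
      rw [hlam 3, show (((3 : Fin 4):ℕ):ℝ) * π / ((4:ℕ):ℝ) + θ₀ = (θ₀ + π/4) + π/2 by
        rw [show ((3 : Fin 4):ℕ) = 3 from rfl]; push_cast; ring]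
    have hs0 : Real.sin θ₀ ≠ 0 := sinpos _ ht0 (by linarith)
    have hc0 : Real.cos θ₀ ≠ 0 :=
      ne_of_gt (Real.cos_pos_of_mem_Ioo ⟨by linarith, by linarith⟩)
    have hs1 : Real.sin (θ₀ + π/4) ≠ 0 := sinpos _ (by linarith) (by linarith)
    have hc1 : Real.cos (θ₀ + π/4) ≠ 0 :=
      ne_of_gt (Real.cos_pos_of_mem_Ioo ⟨by linarith, by linarith⟩)
    have hs2 : Real.sin (2*θ₀) ≠ 0 := sinpos _ (by linarith) (by linarith)
    have hc2 : Real.cos (2*θ₀) ≠ 0 :=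
      ne_of_gt (Real.cos_pos_of_mem_Ioo ⟨by linarith, by linarith⟩)
    have h02 : lam 0 * lam 2 = -1 := by
      rw [l0, l2]; exact cotL1 θ₀ _ rfl hs0 hc0
    have h13 : lam 1 * lam 3 = -1 := by
      rw [l1, l3]; exact cotL1 (θ₀ + π/4) _ rfl hs1 hc1
    have hu : lam 0 + lam 2 = 2 * Real.cot (2*θ₀) := by
      rw [l0, l2]; exact cotL5 θ₀ hs0 hc0
    have hv : lam 1 + lam 3 = 2 * Real.cot (2*θ₀ + π/2) := by
      rw [l1, l3]
      have := cotL5 (θ₀ + π/4) hs1 hc1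
      rw [this, show 2*(θ₀ + π/4) = 2*θ₀ + π/2 by ring]
    have huv : (lam 0 + lam 2) * (lam 1 + lam 3) = -4 := by
      rw [hu, hv]
      have := cotL1 (2*θ₀) _ rfl hs2 hc2
      linear_combination 4 * this
    have hq2 : ((m 2 : ℕ) : ℝ) = m 0 := by
      have h1 : m 2 = m 0 := hper 0
      rw [h1]
    have hq3 : ((m 3 : ℕ) : ℝ) = m 1 := by
      have h1 : m 3 = m 1 := hper 1
      rw [h1]
    simp only [Fin.sum_univ_four] at hmin hn ⊢
    have hn' : (n:ℝ) = (m 0 : ℝ) + m 1 + m 2 + m 3 := by exact_mod_cast hn.symm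
    have hmin' : (m 0:ℝ) * lam 0 + (m 1:ℝ) * lam 1 + (m 0:ℝ) * lam 2 + (m 1:ℝ) * lam 3 = 0 := by
      linear_combination hmin - lam 2 * hq2 - lam 3 * hq3
    push_cast
    linear_combination (-3 : ℝ) * hn' + (lam 2^2 - 3) * hq2 + (lam 3^2 - 3) * hq3
      + (-2:ℝ) * (m 0:ℝ) * h02 + (-2:ℝ) * (m 1:ℝ) * h13
      + (lam 0 + lam 2 + lam 1 + lam 3) * hmin'
      + (-(m 0:ℝ) - (m 1:ℝ)) * huv
  · -- g = 6
    have ht1' : θ₀ < π / 6 := by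
      have : ((6:ℕ):ℝ) = 6 := by norm_num
      rwa [this] at ht1
    have l0 : lam 0 = Real.cot θ₀ := by
      rw [hlam 0, show (((0 : Fin 6):ℕ):ℝ) * π / ((6:ℕ):ℝ) + θ₀ = θ₀ by
        rw [show ((0 : Fin 6):ℕ) = 0 from rfl]; push_cast; ring]
    have l1 : lam 1 = Real.cot ((θ₀ + π/6)) := by
      rw [hlam 1, show (((1 : Fin 6):ℕ):ℝ) * π / ((6:ℕ):ℝ) + θ₀ = θ₀ + π/6 by
        rw [show ((1 : Fin 6):ℕ) = 1 from rfl]; push_cast; ring]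
    have l2 : lam 2 = Real.cot (θ₀ + π/3) := by
      rw [hlam 2, show (((2 : Fin 6):ℕ):ℝ) * π / ((6:ℕ):ℝ) + θ₀ = θ₀ + π/3 by
        rw [show ((2 : Fin 6):ℕ) = 2 from rfl]; push_cast; ring]
    have l3 : lam 3 = Real.cot ((θ₀ + π/6) + π/3) := by
      rw [hlam 3, show (((3 : Fin 6):ℕ):ℝ) * π / ((6:ℕ):ℝ) + θ₀ = (θ₀ + π/6) + π/3 by
        rw [show ((3 : Fin 6):ℕ) = 3 from rfl]; push_cast; ring]
    have l4 : lam 4 = Real.cot (θ₀ + 2*π/3) := by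
      rw [hlam 4, show (((4 : Fin 6):ℕ):ℝ) * π / ((6:ℕ):ℝ) + θ₀ = θ₀ + 2*π/3 by
        rw [show ((4 : Fin 6):ℕ) = 4 from rfl]; push_cast; ring]
    have l5 : lam 5 = Real.cot ((θ₀ + π/6) + 2*π/3) := by
      rw [hlam 5, show (((5 : Fin 6):ℕ):ℝ) * π / ((6:ℕ):ℝ) + θ₀ = (θ₀ + π/6) + 2*π/3 by
        rw [show ((5 : Fin 6):ℕ) = 5 from rfl]; push_cast; ring]
    have hs0 : Real.sin θ₀ ≠ 0 := sinpos _ ht0 (by linarith)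
    have hs2 : Real.sin (θ₀ + π/3) ≠ 0 := sinpos _ (by linarith) (by linarith)
    have hs4 : Real.sin (θ₀ + 2*π/3) ≠ 0 := sinpos _ (by linarith) (by linarith)
    have hs1 : Real.sin (θ₀ + π/6) ≠ 0 := sinpos _ (by linarith) (by linarith)
    have hs3 : Real.sin ((θ₀ + π/6) + π/3) ≠ 0 := sinpos _ (by linarith) (by linarith)
    have hs5 : Real.sin ((θ₀ + π/6) + 2*π/3) ≠ 0 := sinpos _ (by linarith) (by linarith)
    have hsE : Real.sin (3*θ₀) ≠ 0 := sinpos _ (by linarith) (by linarith)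
    have hcE : Real.cos (3*θ₀) ≠ 0 :=
      ne_of_gt (Real.cos_pos_of_mem_Ioo ⟨by linarith, by linarith⟩)
    have hsO : Real.sin (3*(θ₀ + π/6)) ≠ 0 := sinpos _ (by linarith) (by linarith)
    have he2E : lam 0 * lam 2 + lam 0 * lam 4 + lam 2 * lam 4 = -3 := by
      rw [l0, l2, l4]; exact cot_e2 θ₀ hs0 hs2 hs4
    have he2O : lam 1 * lam 3 + lam 1 * lam 5 + lam 3 * lam 5 = -3 := by
      rw [l1, l3, l5]; exact cot_e2 (θ₀ + π/6) hs1 hs3 hs5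
    have hE : lam 0 + lam 2 + lam 4 = 3 * Real.cot (3*θ₀) := by
      rw [l0, l2, l4]; exact cot_e1 θ₀ hs0 hs2 hs4 hsE
    have hO : lam 1 + lam 3 + lam 5 = 3 * Real.cot (3*θ₀ + π/2) := by
      rw [l1, l3, l5]
      have := cot_e1 (θ₀ + π/6) hs1 hs3 hs5 hsO
      rw [this, show 3*(θ₀ + π/6) = 3*θ₀ + π/2 by ring]
    have hEO : (lam 0 + lam 2 + lam 4) * (lam 1 + lam 3 + lam 5) = -9 := by
      rw [hE, hO]
      have := cotL1 (3*θ₀) _ rfl hsE hcE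
      linear_combination 9 * this
    have hq2 : ((m 2 : ℕ) : ℝ) = m 0 := by
      have h1 : m 2 = m 0 := hper 0
      rw [h1]
    have hq4 : ((m 4 : ℕ) : ℝ) = m 0 := by
      have h1 : m 4 = m 2 := hper 2
      have h2 : m 2 = m 0 := hper 0
      rw [h1, h2]
    have hq3 : ((m 3 : ℕ) : ℝ) = m 1 := by
      have h1 : m 3 = m 1 := hper 1
      rw [h1]
    have hq5 : ((m 5 : ℕ) : ℝ) = m 1 := by
      have h1 : m 5 = m 3 := hper 3
      have h2 : m 3 = m 1 := hper 1
      rw [h1, h2]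
    simp only [Fin.sum_univ_six] at hmin hn ⊢
    have hn' : (n:ℝ) = (m 0 : ℝ) + m 1 + m 2 + m 3 + m 4 + m 5 := by exact_mod_cast hn.symm
    have hmin' : (m 0:ℝ) * (lam 0 + lam 2 + lam 4) + (m 1:ℝ) * (lam 1 + lam 3 + lam 5) = 0 := by
      linear_combination hmin - lam 2 * hq2 - lam 4 * hq4 - lam 3 * hq3 - lam 5 * hq5
    push_cast
    linear_combination (-5 : ℝ) * hn' + (lam 2^2 - 5) * hq2 + (lam 4^2 - 5) * hq4
      + (lam 3^2 - 5) * hq3 + (lam 5^2 - 5) * hq5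
      + (-2:ℝ) * (m 0:ℝ) * he2E + (-2:ℝ) * (m 1:ℝ) * he2O
      + (lam 0 + lam 2 + lam 4 + lam 1 + lam 3 + lam 5) * hmin'
      + (-(m 0:ℝ) - (m 1:ℝ)) * hEO
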